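/- Let X be a real Banach space and A ⊂ X × X* a self-cancelling set such that A^⊢ is monotone. Then the closure of A in the weak × weak-* topology of X × X* coincides with the closure of A in the strong × weak-* topology, and this common closure à is a maximal element (with respect to inclusion) of the family of self-cancelling subsets of X × X*. -/

import Mathlib

/-- A subset of `X × X*` is monotone if `⟨x - y, x* - y*⟩ ≥ 0` for all its pairs of points. -/
def IsMonotoneSet {X : Type*} [NormedAddCommGroup X] [NormedSpace ℝ X]
    (T : Set (X × (X →L[ℝ] ℝ))) : Prop :=
  ∀ p ∈ T, ∀ q ∈ T, 0 ≤ (p.2 - q.2) (p.1 - q.1)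

/-- `B^⊢ = {(y, y*) : ⟨x, y*⟩ + ⟨y, x*⟩ = 0 for all (x, x*) ∈ B}`. -/
def vdash {X : Type*} [NormedAddCommGroup X] [NormedSpace ℝ X]
    (B : Set (X × (X →L[ℝ] ℝ))) : Set (X × (X →L[ℝ] ℝ)) :=
  {q | ∀ p ∈ B, p.2 q.1 + q.2 p.1 = 0}

/-- `A ⊆ X × X*` is self-cancelling if it is a linear subspace of `X × X*` and the
duality product vanishes on it. -/
def IsSelfCancelling {X : Type*} [NormedAddCommGroup X] [NormedSpace ℝ X]
    (A : Set (X × (X →L[ℝ] ℝ))) : Prop :=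
  (∃ S : Submodule ℝ (X × (X →L[ℝ] ℝ)), A = ↑S) ∧ ∀ p ∈ A, p.2 p.1 = 0

/-- The weak topology on `X`: the initial topology induced by all continuous linear
functionals `X → ℝ`. -/
def weakTopology (X : Type*) [NormedAddCommGroup X] [NormedSpace ℝ X] :
    TopologicalSpace X :=
  TopologicalSpace.induced (fun x => fun f : X →L[ℝ] ℝ => f x) Pi.topologicalSpace

/-- The weak-* topology on `X* = X →L[ℝ] ℝ`: the topology of pointwise convergence. -/
def weakStarTopology (X : Type*) [NormedAddCommGroup X] [NormedSpace ℝ X] :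
    TopologicalSpace (X →L[ℝ] ℝ) :=
  TopologicalSpace.induced (fun f => fun x : X => f x) Pi.topologicalSpace

section Auxiliary

variable {X : Type*} [NormedAddCommGroup X] [NormedSpace ℝ X]

instance : LocallyConvexSpace ℝ (WeakDual ℝ X) := WeakBilin.locallyConvexSpace

instance : ContinuousSMul ℝ (WeakSpace ℝ X) :=
  WeakBilin.instContinuousSMul ((topDualPairing ℝ X).flip)

lemma sc_pair {A : Set (X × (X →L[ℝ] ℝ))} (hA : IsSelfCancelling A) :
    ∀ p ∈ A, ∀ q ∈ A, p.2 q.1 + q.2 p.1 = 0 := by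
  obtain ⟨⟨S, rfl⟩, h0⟩ := hA
  intro p hp q hq
  have hpq : p + q ∈ S := S.add_mem hp hq
  have h1 := h0 _ hpq
  have h2 := h0 _ hp
  have h3 := h0 _ hq
  simp only [Prod.fst_add, Prod.snd_add, ContinuousLinearMap.add_apply, map_add] at h1
  linarith

lemma vdash_zero (A : Set (X × (X →L[ℝ] ℝ))) : (0 : X × (X →L[ℝ] ℝ)) ∈ vdash A := by
  intro p hp; simp

lemma vdash_add {A : Set (X × (X →L[ℝ] ℝ))} {q r : X × (X →L[ℝ] ℝ)}
    (hq : q ∈ vdash A) (hr : r ∈ vdash A) : q + r ∈ vdash A := by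
  intro p hp
  have h1 := hq p hp
  have h2 := hr p hp
  simp only [Prod.fst_add, Prod.snd_add, ContinuousLinearMap.add_apply, map_add]
  linarith

lemma vdash_smul {A : Set (X × (X →L[ℝ] ℝ))} {q : X × (X →L[ℝ] ℝ)} (t : ℝ)
    (hq : q ∈ vdash A) : t • q ∈ vdash A := by
  intro p hp
  have h1 := hq p hp
  simp only [Prod.smul_fst, Prod.smul_snd, ContinuousLinearMap.smul_apply, map_smul,
    smul_eq_mul]
  linear_combination t * h1

lemma vdash_psd {A : Set (X × (X →L[ℝ] ℝ))} (hmono : IsMonotoneSet (vdash A)) :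
    ∀ r ∈ vdash A, 0 ≤ r.2 r.1 := by
  intro r hr
  have := hmono r hr 0 (vdash_zero A)
  simpa using this

lemma key_orth {A : Set (X × (X →L[ℝ] ℝ))} (hmono : IsMonotoneSet (vdash A))
    {q : X × (X →L[ℝ] ℝ)} (hq : q ∈ vdash A) (hq0 : q.2 q.1 = 0) :
    ∀ r ∈ vdash A, r.2 q.1 + q.2 r.1 = 0 := by
  intro r hr
  set c : ℝ := r.2 r.1 with hc
  set b : ℝ := r.2 q.1 + q.2 r.1 with hb
  have hquad : ∀ t : ℝ, 0 ≤ c * (t * t) + b * t + 0 := by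
    intro t
    have hmem : q + t • r ∈ vdash A := vdash_add hq (vdash_smul t hr)
    have h := vdash_psd hmono _ hmem
    simp only [Prod.fst_add, Prod.snd_add, Prod.smul_fst, Prod.smul_snd,
      ContinuousLinearMap.add_apply, ContinuousLinearMap.smul_apply, map_add, map_smul,
      smul_eq_mul] at h
    have heq : c * (t * t) + b * t + 0 =
        q.2 q.1 + t * r.2 q.1 + t * (q.2 r.1 + t * r.2 r.1) := by
      rw [hc, hb, hq0]; ring
    linarith [h, heq.ge, heq.le]
  have hd := discrim_le_zero hquad
  rw [discrim] at hd
  nlinarith [sq_nonneg b, hd]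

/-- evaluation at a point, as a linear functional on the weak-star dual -/
noncomputable def evalLM (a : X) : WeakDual ℝ X →ₗ[ℝ] ℝ where
  toFun φ := φ a
  map_add' _ _ := rfl
  map_smul' _ _ := rfl

/-- every weak-star continuous linear functional on `X*` is evaluation at some point of `X` -/
lemma weakDual_dual_eval (h : WeakDual ℝ X →L[ℝ] ℝ) :
    ∃ a : X, ∀ φ : WeakDual ℝ X, h φ = φ a := by
  have hcont : h ⁻¹' Set.Ioo (-1 : ℝ) 1 ∈ nhds (0 : WeakDual ℝ X) := by
    have := h.continuous.continuousAt (x := 0)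
    apply this
    rw [map_zero]
    exact Ioo_mem_nhds (by norm_num) (by norm_num)
  change _ ∈ @nhds (WeakDual ℝ X) (TopologicalSpace.induced
    (fun (x : WeakDual ℝ X) (y : X) => topDualPairing ℝ X x y) Pi.topologicalSpace) 0 at hcont
  rw [nhds_induced, Filter.mem_comap] at hcont
  obtain ⟨t, ht, hts⟩ := hcont
  rw [nhds_pi, Filter.mem_pi] at ht
  obtain ⟨I, hIfin, V, hV, hVt⟩ := ht
  -- any functional vanishing on `I` is killed by `h`
  have hker : ∀ φ : WeakDual ℝ X, (∀ x ∈ I, φ x = 0) → h φ = 0 := by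
    intro φ hφ
    by_contra hne
    have hsc : ∀ c : ℝ, |h (c • φ)| < 1 := by
      intro c
      have hmem : (fun y : X => (topDualPairing ℝ X (c • φ)) y) ∈ Set.pi I V := by
        intro x hx
        have h0 : (topDualPairing ℝ X (c • φ)) x = 0 := by
          have : φ x = 0 := hφ x hx
          show c • φ x = 0
          rw [this, smul_zero]
        show ((topDualPairing ℝ X) (c • φ)) x ∈ V x
        rw [h0]
        have := mem_of_mem_nhds (hV x)
        exact this
      have := hts (hVt hmem)
      simp only [Set.mem_preimage, Set.mem_Ioo] at this
      rw [abs_lt]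
      exact this
    have := hsc ((2 : ℝ) / h φ)
    rw [map_smul] at this
    simp only [smul_eq_mul, div_mul_cancel₀ _ hne] at this
    norm_num at this
  -- conclude that `h` is a finite linear combination of evaluations
  have : Finite I := hIfin.to_subtype
  have := Fintype.ofFinite I
  have hker' : (⨅ i : I, LinearMap.ker (evalLM (i : X) : WeakDual ℝ X →ₗ[ℝ] ℝ)) ≤
      LinearMap.ker (h.toLinearMap) := by
    intro φ hφ
    rw [Submodule.mem_iInf] at hφ
    rw [LinearMap.mem_ker]
    apply hker
    intro x hx
    exact hφ ⟨x, hx⟩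
  have hspan := mem_span_of_iInf_ker_le_ker hker'
  rw [Submodule.mem_span_range_iff_exists_fun] at hspan
  obtain ⟨c, hc⟩ := hspan
  refine ⟨∑ i : I, c i • (i : X), ?_⟩
  intro φ
  have h1 := congrArg (fun K : WeakDual ℝ X →ₗ[ℝ] ℝ => K φ) hc
  simp only [LinearMap.coe_sum, Finset.sum_apply, LinearMap.smul_apply, smul_eq_mul] at h1
  have h2 : ∑ x : I, c x * φ (x : X) = h φ := h1
  rw [← h2, map_sum]
  congr 1
  ext i
  rw [map_smul]
  simp

/-- Key step: any self-cancelling set containing `A` is contained in the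
strong × weak-* closure of `A`. -/
lemma key_subset {A B : Set (X × (X →L[ℝ] ℝ))} (hA : IsSelfCancelling A)
    (hmono : IsMonotoneSet (vdash A))
    (hB : IsSelfCancelling B) (hAB : A ⊆ B) :
    B ⊆ @closure (X × WeakDual ℝ X) instTopologicalSpaceProd A := by
  set A' : Set (X × WeakDual ℝ X) := A with hA'
  intro q₀ hq₀
  set q : X × WeakDual ℝ X := q₀ with hqdef
  by_contra hqc
  obtain ⟨⟨S, hS⟩, -⟩ := id hA
  set S' : Submodule ℝ (X × WeakDual ℝ X) := S with hS'
  have hAS : A' = (S' : Set (X × WeakDual ℝ X)) := hS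
  have hclconv : Convex ℝ (closure A') := by
    rw [hAS]; exact S'.convex.closure
  have hqc' : q ∉ closure A' := hqc
  obtain ⟨f, u, hfu, huq⟩ :=
    geometric_hahn_banach_closed_point hclconv isClosed_closure hqc'
  -- f vanishes on the closure of A
  have hT : (S'.topologicalClosure : Set (X × WeakDual ℝ X)) = closure A' := by
    rw [Submodule.topologicalClosure_coe, hAS]
  have hf0 : ∀ p ∈ closure A', f p = 0 := by
    intro p hp
    by_contra hne
    have hsm : ((u + 1) / f p) • p ∈ closure A' := by
      rw [← hT] at hp ⊢
      exact S'.topologicalClosure.smul_mem _ hp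
    have := hfu _ hsm
    rw [map_smul, smul_eq_mul, div_mul_cancel₀ _ hne] at this
    linarith
  have hu0 : 0 < u := by
    have h0 : (0 : X × WeakDual ℝ X) ∈ closure A' := by
      rw [← hT]; exact S'.topologicalClosure.zero_mem
    have := hfu _ h0
    rw [map_zero] at this
    exact this
  -- decompose f into its two components
  set g : X →L[ℝ] ℝ := f.comp (ContinuousLinearMap.inl ℝ X (WeakDual ℝ X)) with hg
  set h : WeakDual ℝ X →L[ℝ] ℝ := f.comp (ContinuousLinearMap.inr ℝ X (WeakDual ℝ X)) with hh
  have hfdec : ∀ z : X × WeakDual ℝ X, f z = g z.1 + h z.2 := by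
    intro z
    rw [hg, hh]
    simp only [ContinuousLinearMap.comp_apply, ContinuousLinearMap.inl_apply,
      ContinuousLinearMap.inr_apply]
    rw [← map_add]
    congr 1
    ext <;> simp
  obtain ⟨a, ha⟩ := weakDual_dual_eval h
  -- the pair (a, g) lies in A^⊢
  have hr : ((a, g) : X × (X →L[ℝ] ℝ)) ∈ vdash A := by
    intro p hp
    have hfp : f p = 0 := hf0 p (subset_closure hp)
    rw [hfdec p, ha p.2] at hfp
    show p.2 a + g p.1 = 0
    rw [add_comm]; exact hfp
  -- q is in A^⊢ and self-orthogonal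
  have hqv : q₀ ∈ vdash A := fun p hp => sc_pair hB p (hAB hp) q₀ hq₀
  have hq0 : q₀.2 q₀.1 = 0 := hB.2 q₀ hq₀
  have horth := key_orth hmono hqv hq0 _ hr
  -- but f q > u > 0 while f q = 0, contradiction
  have hfq : f q = 0 := by
    rw [hfdec q, ha q.2]
    show g q₀.1 + q₀.2 a = 0
    simpa using horth
  linarith

/-- the symmetric pairing against a fixed point is continuous on the weak × weak-* product -/
lemma bform_continuous (r : X × (X →L[ℝ] ℝ)) :
    Continuous fun z : WeakSpace ℝ X × WeakDual ℝ X => (r.2 z.1 + z.2 r.1 : ℝ) := by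
  have h1 : Continuous fun z : WeakSpace ℝ X × WeakDual ℝ X => (r.2 z.1 : ℝ) :=
    (WeakBilin.eval_continuous (topDualPairing ℝ X).flip r.2).comp continuous_fst
  have h2 : Continuous fun z : WeakSpace ℝ X × WeakDual ℝ X => (z.2 r.1 : ℝ) :=
    (WeakDual.eval_continuous r.1).comp continuous_snd
  exact h1.add h2

/-- the weak × weak-* closure of a self-cancelling set is self-cancelling -/
lemma wclosure_selfCancelling {A : Set (X × (X →L[ℝ] ℝ))} (hA : IsSelfCancelling A) :
    @IsSelfCancelling X _ _
      (@closure (WeakSpace ℝ X × WeakDual ℝ X) instTopologicalSpaceProd A) := by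
  set A' : Set (WeakSpace ℝ X × WeakDual ℝ X) := A with hA'
  obtain ⟨⟨S, hS⟩, -⟩ := id hA
  set S' : Submodule ℝ (WeakSpace ℝ X × WeakDual ℝ X) := S with hS'
  have hAS : A' = (S' : Set (WeakSpace ℝ X × WeakDual ℝ X)) := hS
  constructor
  · refine ⟨(S'.topologicalClosure : Submodule ℝ (WeakSpace ℝ X × WeakDual ℝ X)), ?_⟩
    show closure A' = ((S'.topologicalClosure : Submodule ℝ (WeakSpace ℝ X × WeakDual ℝ X)) :
      Set (WeakSpace ℝ X × WeakDual ℝ X))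
    rw [Submodule.topologicalClosure_coe, hAS]
  · -- the closure is contained in A^⊢ …
    have hclv : ∀ r ∈ A, ∀ p ∈ closure A', (r.2 p.1 + p.2 r.1 : ℝ) = 0 := by
      intro r hr
      have : closure A' ⊆ {z : WeakSpace ℝ X × WeakDual ℝ X | r.2 z.1 + z.2 r.1 = 0} := by
        apply closure_minimal
        · intro p hp
          exact sc_pair hA r hr p hp
        · exact isClosed_eq (bform_continuous r) continuous_const
      exact fun p hp => this hp
    -- … and then in its own ⊢-orthogonal
    intro p hp
    have : closure A' ⊆ {z : WeakSpace ℝ X × WeakDual ℝ X | p.2 z.1 + z.2 p.1 = 0} := by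
      apply closure_minimal
      · intro r hr
        have := hclv r hr p hp
        show p.2 r.1 + r.2 p.1 = 0
        rw [add_comm]; exact this
      · exact isClosed_eq (bform_continuous p) continuous_const
    have hpp : p.2 p.1 + p.2 p.1 = 0 := this hp
    linarith

/-- the strong × weak-* closure is contained in the weak × weak-* closure -/
lemma sclosure_subset_wclosure (A : Set (X × (X →L[ℝ] ℝ))) :
    @closure (X × WeakDual ℝ X) instTopologicalSpaceProd A ⊆
      @closure (WeakSpace ℝ X × WeakDual ℝ X) instTopologicalSpaceProd A := by
  set A' : Set (WeakSpace ℝ X × WeakDual ℝ X) := A with hA'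
  have hcont : Continuous fun z : X × WeakDual ℝ X =>
      ((toWeakSpaceCLM ℝ X z.1, z.2) : WeakSpace ℝ X × WeakDual ℝ X) :=
    ((map_continuous (toWeakSpaceCLM ℝ X)).comp continuous_fst).prodMk continuous_snd
  have h := hcont.closure_preimage_subset A'
  intro z hz
  exact h hz

end Auxiliary

/-- If `A ⊆ X × X*` is self-cancelling and `A^⊢` is monotone, then the closure of `A`
in the weak × weak-* topology coincides with its closure in the strong × weak-*
topology, and this common closure is a maximal self-cancelling subset of `X × X*`. -/
theorem closure_selfCancelling_maximal {X : Type*} [NormedAddCommGroup X]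
    [NormedSpace ℝ X] [CompleteSpace X] (A : Set (X × (X →L[ℝ] ℝ)))
    (hA : IsSelfCancelling A) (hmono : IsMonotoneSet (vdash A)) :
    @closure _ (@instTopologicalSpaceProd _ _ (weakTopology X) (weakStarTopology X)) A =
      @closure _ (@instTopologicalSpaceProd _ _ inferInstance (weakStarTopology X)) A ∧
    IsSelfCancelling
      (@closure _ (@instTopologicalSpaceProd _ _ (weakTopology X) (weakStarTopology X)) A) ∧
    ∀ B, IsSelfCancelling B →
      (@closure _ (@instTopologicalSpaceProd _ _ (weakTopology X) (weakStarTopology X)) A) ⊆ B →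
      B = @closure _ (@instTopologicalSpaceProd _ _ (weakTopology X) (weakStarTopology X)) A := by
  have h2 : @IsSelfCancelling X _ _
      (@closure (WeakSpace ℝ X × WeakDual ℝ X) instTopologicalSpaceProd A) :=
    wclosure_selfCancelling hA
  have h3 : A ⊆ @closure (WeakSpace ℝ X × WeakDual ℝ X) instTopologicalSpaceProd A :=
    subset_closure (X := WeakSpace ℝ X × WeakDual ℝ X) (s := A)
  have h4 := key_subset hA hmono h2 h3
  have h1 := sclosure_subset_wclosure A
  have heq : @closure (WeakSpace ℝ X × WeakDual ℝ X) instTopologicalSpaceProd A =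
      @closure (X × WeakDual ℝ X) instTopologicalSpaceProd A :=
    subset_antisymm h4 h1
  refine ⟨heq, h2, ?_⟩
  intro B hB hsubB
  have hAB : A ⊆ B := h3.trans hsubB
  have h5 := key_subset hA hmono hB hAB
  exact subset_antisymm (h5.trans h1) hsubB
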